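/- arXiv:2306.14386 — 4 statements merged into one kernel-verified Lean document; each statement's English description precedes it below -/
import Mathlib

section
/- Kaloujnine–Krasner Universal Embedding Theorem: Let G and Q be groups, let ε : G → Q be a surjective group homomorphism, let N := ker ε, and let s : Q → G be any function with ε ∘ s = id_Q. For g ∈ G define σ_g : Q → N by σ_g(q) := s(q)⁻¹ · g · s(ε(g)⁻¹ q). Then σ_g(q) indeed lies in N = ker ε for every q ∈ Q, and the map φ : G → N ≀_r Q = (Q → N) ⋊_θ Q given by φ(g) = (σ_g, ε(g)) is an injective group homomorphism. In particular, every extension of N by Q embeds into the regular wreath product N ≀_r Q. -/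
/-- The homomorphism `θ : H → Aut(Ω → K)` given by `(θ_h f)(ω) = f (h⁻¹ • ω)`. -/
def wreathTheta (K : Type*) {H Ω : Type*} [Group K] [Group H] [MulAction H Ω] :
    H →* MulAut (Ω → K) where
  toFun h :=
    { toFun := fun f ω => f (h⁻¹ • ω)
      invFun := fun f ω => f (h • ω)
      left_inv := fun f => funext fun ω => by simp
      right_inv := fun f => funext fun ω => by simp
      map_mul' := fun f g => rfl }
  map_one' := by ext f ω; simp
  map_mul' := fun h₁ h₂ => by ext f ω; simp [mul_smul]

/-- The wreath product `K ≀_Ω H := (Ω → K) ⋊_θ H`. -/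
abbrev WreathProduct (K Ω H : Type*) [Group K] [Group H] [MulAction H Ω] : Type _ :=
  SemidirectProduct (Ω → K) H (wreathTheta K)

/-- The regular wreath product `K ≀_r H := K ≀_H H`, with `H` acting on itself by
left multiplication. -/
abbrev RegularWreathProduct' (K H : Type*) [Group K] [Group H] : Type _ :=
  WreathProduct K H H

/-- **Kaloujnine–Krasner universal embedding theorem.**
Let `ε : G → Q` be a surjective group homomorphism with kernel `N := ker ε`, and let
`s : Q → G` satisfy `ε ∘ s = id`.  For `g ∈ G` and `q ∈ Q` the element
`σ_g(q) := s(q)⁻¹ * g * s(ε(g)⁻¹ * q)` lies in `N`, and the map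
`φ : G → N ≀_r Q`, `φ(g) = (σ_g, ε(g))`, is an injective group homomorphism. -/
theorem kaloujnine_krasner {G Q : Type*} [Group G] [Group Q]
    (ε : G →* Q) (hεsurj : Function.Surjective ε)
    (s : Q → G) (hs : ∀ q : Q, ε (s q) = q) :
    (∀ (g : G) (q : Q), (s q)⁻¹ * g * s ((ε g)⁻¹ * q) ∈ ε.ker) ∧
    ∃ φ : G →* RegularWreathProduct' ε.ker Q,
      Function.Injective φ ∧
      ∀ g : G, (φ g).right = ε g ∧
        ∀ q : Q, (((φ g).left q : G) = (s q)⁻¹ * g * s ((ε g)⁻¹ * q)) := by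

  have hmem : ∀ (g : G) (q : Q), (s q)⁻¹ * g * s ((ε g)⁻¹ * q) ∈ ε.ker := by
    intro g q
    simp [MonoidHom.mem_ker, hs, mul_assoc]
  refine ⟨hmem, ?_⟩
  have harg : ∀ (g₁ g₂ : G) (q : Q),
      (ε (g₁ * g₂))⁻¹ * q = (ε g₂)⁻¹ * ((ε g₁)⁻¹ * q) := by
    intro g₁ g₂ q
    simp [mul_inv_rev, mul_assoc]
  refine ⟨{ toFun := fun g => ⟨fun q => ⟨(s q)⁻¹ * g * s ((ε g)⁻¹ * q), hmem g q⟩, ε g⟩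
            map_one' := ?_
            map_mul' := ?_ }, ?_, ?_⟩
  · ext q
    · simp
    · simp
  · intro g₁ g₂
    ext q
    · show (s q)⁻¹ * (g₁ * g₂) * s ((ε (g₁ * g₂))⁻¹ * q) =
        ((s q)⁻¹ * g₁ * s ((ε g₁)⁻¹ * q)) *
          ((s ((ε g₁)⁻¹ * q))⁻¹ * g₂ * s ((ε g₂)⁻¹ * ((ε g₁)⁻¹ * q)))
      rw [harg]
      group
    · simp
  · intro g₁ g₂ h
    have h1 : ε g₁ = ε g₂ := congrArg SemidirectProduct.right h
    have h2 := congrArg (fun x : RegularWreathProduct' ε.ker Q =>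
      ((SemidirectProduct.left x 1 : ε.ker) : G)) h
    have : (s 1)⁻¹ * g₁ * s ((ε g₁)⁻¹ * 1) = (s 1)⁻¹ * g₂ * s ((ε g₂)⁻¹ * 1) := h2
    rw [h1] at this
    exact mul_left_cancel (mul_right_cancel this)
  · intro g
    exact ⟨rfl, fun q => rfl⟩
end

section
/- Let F be a field with a fixed algebraic closure F̄, and let K ⊆ L be intermediate fields of F̄/F with L/F finite and separable. Let K^c and L^c denote the Galois closures (normal closures inside F̄) of K/F and L/F respectively, so K^c ⊆ L^c, both K^c/F and L^c/F are finite Galois, and Gal(L^c/K^c) is the subgroup of Gal(L^c/F) of automorphisms fixing K^c pointwise. Let ε : Gal(L^c/F) → Gal(K^c/F) be the (surjective) restriction homomorphism and let s : Gal(K^c/F) → Gal(L^c/F) be any function with ε ∘ s = id. For ρ ∈ Gal(L^c/F) define σ_ρ : Gal(K^c/F) → Gal(L^c/K^c) by σ_ρ(τ) := s(τ)⁻¹ ∘ ρ ∘ s(ε(ρ)⁻¹ ∘ τ). Then σ_ρ(τ) indeed fixes K^c pointwise for every τ, and the map φ : Gal(L^c/F) → Gal(L^c/K^c) ≀_r Gal(K^c/F),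 φ(ρ) = (σ_ρ, ε(ρ)), is an injective group homomorphism. -/
/-- The Galois closure (normal closure inside `Fbar`) of an intermediate field `M` of
`Fbar/F`. -/
noncomputable def galoisClosure (F : Type*) {Fbar : Type*} [Field F] [Field Fbar]
    [Algebra F Fbar] (M : IntermediateField F Fbar) : IntermediateField F Fbar :=
  IntermediateField.normalClosure F ↥M Fbar

/-- For a tower `F ⊆ K ⊆ L` inside an algebraic closure `Fbar` of `F`, with
`L/F` finite and separable, let `K^c ⊆ L^c` be the Galois closures of `K/F` and `L/F`, let
`GalLcKc = Gal(L^c/K^c)` be the subgroup of `Gal(L^c/F)` fixing `K^c` pointwise, let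
`ε : Gal(L^c/F) → Gal(K^c/F)` be the (surjective) restriction homomorphism, and let
`s` be a set-theoretic section of `ε`.  Then for all `ρ, τ` the automorphism
`σ_ρ(τ) := s(τ)⁻¹ ∘ ρ ∘ s(ε(ρ)⁻¹ ∘ τ)` fixes `K^c` pointwise, and
`φ : ρ ↦ (σ_ρ, ε(ρ))` is an injective group homomorphism
`Gal(L^c/F) → Gal(L^c/K^c) ≀_r Gal(K^c/F)`. -/
theorem galois_embeds_regular_wreath
    {F Fbar : Type*} [Field F] [Field Fbar] [Algebra F Fbar] [IsAlgClosure F Fbar]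
    (K L : IntermediateField F Fbar) (hKL : K ≤ L)
    [FiniteDimensional F ↥L] [Algebra.IsSeparable F ↥L]
    (hle : galoisClosure F K ≤ galoisClosure F L)
    (GalLcKc : Subgroup (↥(galoisClosure F L) ≃ₐ[F] ↥(galoisClosure F L)))
    (hGalLcKc : ∀ ρ, ρ ∈ GalLcKc ↔
      ∀ x : ↥(galoisClosure F L), (x : Fbar) ∈ galoisClosure F K → ρ x = x)
    (ε : (↥(galoisClosure F L) ≃ₐ[F] ↥(galoisClosure F L)) →*
      (↥(galoisClosure F K) ≃ₐ[F] ↥(galoisClosure F K)))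
    (hεsurj : Function.Surjective ε)
    (hε : ∀ ρ (x : ↥(galoisClosure F K)),
      ((ε ρ x : ↥(galoisClosure F K)) : Fbar) = (ρ (IntermediateField.inclusion hle x) : Fbar))
    (s : (↥(galoisClosure F K) ≃ₐ[F] ↥(galoisClosure F K)) →
      (↥(galoisClosure F L) ≃ₐ[F] ↥(galoisClosure F L)))
    (hs : ∀ τ, ε (s τ) = τ) :
    (∀ ρ τ, (s τ)⁻¹ * ρ * s ((ε ρ)⁻¹ * τ) ∈ GalLcKc) ∧
    ∃ φ : (↥(galoisClosure F L) ≃ₐ[F] ↥(galoisClosure F L)) →*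
        RegularWreathProduct' ↥GalLcKc (↥(galoisClosure F K) ≃ₐ[F] ↥(galoisClosure F K)),
      Function.Injective φ ∧
      ∀ ρ, (φ ρ).right = ε ρ ∧
        ∀ τ, (((φ ρ).left τ : ↥(galoisClosure F L) ≃ₐ[F] ↥(galoisClosure F L)) =
          (s τ)⁻¹ * ρ * s ((ε ρ)⁻¹ * τ)) := by
  
  have key : ∀ (g : (↥(galoisClosure F L) ≃ₐ[F] ↥(galoisClosure F L)))
      (x : ↥(galoisClosure F L)) (hx : (x : Fbar) ∈ galoisClosure F K),
      ((g x : ↥(galoisClosure F L)) : Fbar)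
        = ((ε g ⟨x, hx⟩ : ↥(galoisClosure F K)) : Fbar) := by
    intro g x hx
    rw [hε g ⟨x, hx⟩]
    have : IntermediateField.inclusion hle ⟨x, hx⟩ = x := Subtype.ext rfl
    rw [this]
  have hmem : ∀ ρ τ, (s τ)⁻¹ * ρ * s ((ε ρ)⁻¹ * τ) ∈ GalLcKc := by
    intro ρ τ
    rw [hGalLcKc]
    intro x hx
    have h1 : ((s ((ε ρ)⁻¹ * τ) x : ↥(galoisClosure F L)) : Fbar)
        = ((((ε ρ)⁻¹ * τ) ⟨x, hx⟩ : ↥(galoisClosure F K)) : Fbar) := by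
      rw [key _ x hx, hs]
    have hx1 : ((s ((ε ρ)⁻¹ * τ) x : ↥(galoisClosure F L)) : Fbar) ∈ galoisClosure F K := by
      rw [h1]; exact SetLike.coe_mem _
    have h2 : ((ρ (s ((ε ρ)⁻¹ * τ) x) : ↥(galoisClosure F L)) : Fbar)
        = ((τ ⟨x, hx⟩ : ↥(galoisClosure F K)) : Fbar) := by
      rw [key ρ _ hx1]
      have e1 : (⟨_, hx1⟩ : ↥(galoisClosure F K)) = ((ε ρ)⁻¹ * τ) ⟨x, hx⟩ := Subtype.ext h1
      rw [e1]
      congr 1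
      show ε ρ ((ε ρ)⁻¹ (τ ⟨x, hx⟩)) = τ ⟨x, hx⟩
      exact AlgEquiv.apply_symm_apply (ε ρ) _
    have hx2 : ((ρ (s ((ε ρ)⁻¹ * τ) x) : ↥(galoisClosure F L)) : Fbar) ∈ galoisClosure F K := by
      rw [h2]; exact SetLike.coe_mem _
    show (s τ)⁻¹ (ρ (s ((ε ρ)⁻¹ * τ) x)) = x
    refine Subtype.ext ?_
    rw [key _ _ hx2, map_inv, hs]
    have e2 : (⟨_, hx2⟩ : ↥(galoisClosure F K)) = τ ⟨x, hx⟩ := Subtype.ext h2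
    rw [e2]
    show ((τ⁻¹ (τ ⟨x, hx⟩) : ↥(galoisClosure F K)) : Fbar) = (x : Fbar)
    exact congrArg Subtype.val (AlgEquiv.symm_apply_apply τ ⟨x, hx⟩)
  refine ⟨hmem, MonoidHom.mk' (fun ρ =>
      ⟨fun τ => ⟨(s τ)⁻¹ * ρ * s ((ε ρ)⁻¹ * τ), hmem ρ τ⟩, ε ρ⟩) ?_, ?_,
      fun ρ => ⟨rfl, fun τ => rfl⟩⟩
  · intro ρ₁ ρ₂
    refine SemidirectProduct.ext ?_ (by exact map_mul ε ρ₁ ρ₂)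
    funext τ
    refine Subtype.ext ?_
    show (s τ)⁻¹ * (ρ₁ * ρ₂) * s ((ε (ρ₁ * ρ₂))⁻¹ * τ)
      = ((s τ)⁻¹ * ρ₁ * s ((ε ρ₁)⁻¹ * τ)) *
        ((s ((ε ρ₁)⁻¹ * τ))⁻¹ * ρ₂ * s ((ε ρ₂)⁻¹ * ((ε ρ₁)⁻¹ * τ)))
    rw [map_mul, mul_inv_rev]
    simp [mul_assoc]
  · intro ρ₁ ρ₂ h
    have hr := congrArg SemidirectProduct.right h
    have hl := congrArg SemidirectProduct.left h
    have hr' : ε ρ₁ = ε ρ₂ := hr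
    have h1' : (s 1)⁻¹ * ρ₁ * s ((ε ρ₁)⁻¹ * 1) = (s 1)⁻¹ * ρ₂ * s ((ε ρ₂)⁻¹ * 1) :=
      congrArg Subtype.val (congrFun hl 1)
    rw [hr'] at h1'
    exact mul_left_cancel (mul_right_cancel h1')
end

section
/- Let F be a field with a fixed algebraic closure F̄, and let K ⊆ L be intermediate fields of F̄/F with L/F finite and separable. Suppose K contains a primitive n-th root of unity and that L/K is a cyclic extension of degree n, i.e., L/K is Galois with cyclic Galois group of order n. Let K^c and L^c denote the Galois closures of K/F and L/F inside F̄, and let Ω := Hom_F(K, K^c) with Gal(K^c/F) acting on Ω by post-composition. Then there exists an injective group homomorphism from Gal(L^c/F) into the wreath product Gal(L/K) ≀_Ω Gal(K^c/F) = (Ω → Gal(L/K)) ⋊_θ Gal(K^c/F). -/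
private lemma conj_aux {K L M : Type*} [Field K] [Field L] [Field M] [Algebra K L]
    [Normal K L] (μ μ' : L →+* M)
    (h : ∀ x : K, μ' (algebraMap K L x) = μ (algebraMap K L x)) :
    ∃ c : L ≃ₐ[K] L, ∀ x, μ' x = μ (c x) := by
  letI : Algebra K M := (μ.comp (algebraMap K L)).toAlgebra
  letI : Algebra L M := μ.toAlgebra
  haveI : IsScalarTower K L M := IsScalarTower.of_algebraMap_eq' rfl
  let μ'a : L →ₐ[K] M := { toRingHom := μ', commutes' := fun x => h x }
  let e := Normal.algHomEquivAut K M L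
  refine ⟨e μ'a, fun x => ?_⟩
  have h2 := DFunLike.congr_fun (e.symm_apply_apply μ'a) x
  exact h2.symm



/-- The algebra automorphism group of `B` acts on the left on `A →ₐ[R] B` by
post-composition. -/
instance algEquivMulActionAlgHom {R A B : Type*} [CommSemiring R] [Semiring A] [Semiring B]
    [Algebra R A] [Algebra R B] : MulAction (B ≃ₐ[R] B) (A →ₐ[R] B) where
  smul g ω := (g : B →ₐ[R] B).comp ω
  one_smul ω := by ext x; rfl
  mul_smul g h ω := by ext x; rfl

set_option maxHeartbeats 1000000 in
set_option synthInstance.maxHeartbeats 1000000 in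
/-- Let `F ⊆ K ⊆ L` be a tower inside an algebraic closure `Fbar` of `F`
with `L/F` finite and separable.  Suppose `K` contains a primitive `n`-th root of unity and
`L/K` is a cyclic extension of degree `n` (Galois with cyclic Galois group of order `n`).
Let `K^c, L^c` be the Galois closures of `K/F`, `L/F` inside `Fbar` and let
`Ω := Hom_F(K, K^c)` with `Gal(K^c/F)` acting by post-composition.  Then there is an injective
group homomorphism `Gal(L^c/F) → Gal(L/K) ≀_Ω Gal(K^c/F)`. -/
theorem cyclic_embedding
    {F Fbar : Type*} [Field F] [Field Fbar] [Algebra F Fbar] [IsAlgClosure F Fbar]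
    (K L : IntermediateField F Fbar) (hKL : K ≤ L)
    [FiniteDimensional F ↥L] [Algebra.IsSeparable F ↥L]
    [Algebra ↥K ↥L] [IsScalarTower ↥K ↥L Fbar]
    (n : ℕ) (ω : ↥K) (hω : IsPrimitiveRoot ω n)
    [IsGalois ↥K ↥L]
    (hcyc : IsCyclic (↥L ≃ₐ[↥K] ↥L))
    (hdeg : Module.finrank ↥K ↥L = n) :
    ∃ φ : (↥(IntermediateField.normalClosure F ↥L Fbar) ≃ₐ[F] ↥(IntermediateField.normalClosure F ↥L Fbar)) →*
        WreathProduct (↥L ≃ₐ[↥K] ↥L) (↥K →ₐ[F] ↥(IntermediateField.normalClosure F ↥K Fbar))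
          (↥(IntermediateField.normalClosure F ↥K Fbar) ≃ₐ[F] ↥(IntermediateField.normalClosure F ↥K Fbar)),
      Function.Injective φ := by
  classical
  haveI : IsScalarTower F (↥K) (↥L) := IsScalarTower.of_algebraMap_eq fun x => by
    apply (algebraMap (↥L) Fbar).injective
    rw [← IsScalarTower.algebraMap_apply F (↥L) Fbar,
      ← IsScalarTower.algebraMap_apply (↥K) (↥L) Fbar,
      ← IsScalarTower.algebraMap_apply F (↥K) Fbar]
  haveI : FiniteDimensional (↥K) (↥L) := FiniteDimensional.right F (↥K) (↥L)
  haveI : IsAlgClosed Fbar := IsAlgClosure.isAlgClosed F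
  have hKcLc : IntermediateField.normalClosure F (↥K) Fbar ≤ IntermediateField.normalClosure F (↥L) Fbar :=
    IntermediateField.normalClosure_mono K L hKL
  letI : Algebra (↥(IntermediateField.normalClosure F (↥K) Fbar)) (↥(IntermediateField.normalClosure F (↥L) Fbar)) :=
    (IntermediateField.inclusion hKcLc).toAlgebra
  haveI : IsScalarTower F (↥(IntermediateField.normalClosure F (↥K) Fbar)) (↥(IntermediateField.normalClosure F (↥L) Fbar)) :=
    IsScalarTower.of_algebraMap_eq fun x => rfl
  let π : (↥(IntermediateField.normalClosure F ↥L Fbar) ≃ₐ[F] ↥(IntermediateField.normalClosure F ↥L Fbar)) →*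
      (↥(IntermediateField.normalClosure F ↥K Fbar) ≃ₐ[F] ↥(IntermediateField.normalClosure F ↥K Fbar)) :=
    AlgEquiv.restrictNormalHom (↥(IntermediateField.normalClosure F ↥K Fbar))
  have hcomm : ∀ (g : ↥(IntermediateField.normalClosure F ↥L Fbar) ≃ₐ[F] ↥(IntermediateField.normalClosure F ↥L Fbar))
      (y : ↥(IntermediateField.normalClosure F ↥K Fbar)),
      algebraMap (↥(IntermediateField.normalClosure F ↥K Fbar)) (↥(IntermediateField.normalClosure F ↥L Fbar)) (π g y)
        = g (algebraMap (↥(IntermediateField.normalClosure F ↥K Fbar)) (↥(IntermediateField.normalClosure F ↥L Fbar)) y) := fun g y =>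
    AlgEquiv.restrictNormal_commutes g (↥(IntermediateField.normalClosure F ↥K Fbar)) y
  -- a chosen extension of each ω : Ω
  have hsex : ∀ ωq : (↥K →ₐ[F] ↥(IntermediateField.normalClosure F ↥K Fbar)),
      ∃ μ : (↥L →ₐ[F] ↥(IntermediateField.normalClosure F ↥L Fbar)), ∀ x : ↥K,
      μ (algebraMap (↥K) (↥L) x)
        = algebraMap (↥(IntermediateField.normalClosure F ↥K Fbar)) (↥(IntermediateField.normalClosure F ↥L Fbar)) (ωq x) := by
    intro ωq
    obtain ⟨φ0, hφ0⟩ := IsAlgClosed.surjective_restrictDomain_of_isAlgebraic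
      (K := F) (L := ↥K) (E := ↥L) (M := Fbar) ((IntermediateField.normalClosure F ↥K Fbar).val.comp ωq)
    refine ⟨(normalClosure.algHomEquiv F (↥L) Fbar).symm φ0, fun x => Subtype.ext ?_⟩
    have h3 : (IntermediateField.normalClosure F ↥L Fbar).val
        (((normalClosure.algHomEquiv F (↥L) Fbar).symm φ0) (algebraMap (↥K) (↥L) x))
        = φ0 (algebraMap (↥K) (↥L) x) :=
      DFunLike.congr_fun
        ((normalClosure.algHomEquiv F (↥L) Fbar).apply_symm_apply φ0) (algebraMap (↥K) (↥L) x)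
    have h4 : φ0 (algebraMap (↥K) (↥L) x) = (IntermediateField.normalClosure F ↥K Fbar).val (ωq x) :=
      DFunLike.congr_fun hφ0 x
    exact h3.trans h4
  let s : (↥K →ₐ[F] ↥(IntermediateField.normalClosure F ↥K Fbar)) → (↥L →ₐ[F] ↥(IntermediateField.normalClosure F ↥L Fbar)) :=
    fun ωq => (hsex ωq).choose
  have hs : ∀ (ωq : ↥K →ₐ[F] ↥(IntermediateField.normalClosure F ↥K Fbar)) (x : ↥K),
      s ωq (algebraMap (↥K) (↥L) x)
        = algebraMap (↥(IntermediateField.normalClosure F ↥K Fbar)) (↥(IntermediateField.normalClosure F ↥L Fbar)) (ωq x) :=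
    fun ωq => (hsex ωq).choose_spec
  -- every embedding of L restricts to some ω : Ω
  have hrex : ∀ μ : (↥L →ₐ[F] ↥(IntermediateField.normalClosure F ↥L Fbar)),
      ∃ ωq : (↥K →ₐ[F] ↥(IntermediateField.normalClosure F ↥K Fbar)), ∀ x : ↥K,
      μ (algebraMap (↥K) (↥L) x)
        = algebraMap (↥(IntermediateField.normalClosure F ↥K Fbar)) (↥(IntermediateField.normalClosure F ↥L Fbar)) (ωq x) := by
    intro μ
    refine ⟨(normalClosure.algHomEquiv F (↥K) Fbar).symm
      (((IntermediateField.normalClosure F ↥L Fbar).val.comp μ).comp (IsScalarTower.toAlgHom F (↥K) (↥L))),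
      fun x => Subtype.ext ?_⟩
    have h3 : (IntermediateField.normalClosure F ↥K Fbar).val
        (((normalClosure.algHomEquiv F (↥K) Fbar).symm
          (((IntermediateField.normalClosure F ↥L Fbar).val.comp μ).comp (IsScalarTower.toAlgHom F (↥K) (↥L)))) x)
        = (IntermediateField.normalClosure F ↥L Fbar).val (μ (algebraMap (↥K) (↥L) x)) :=
      DFunLike.congr_fun ((normalClosure.algHomEquiv F (↥K) Fbar).apply_symm_apply
        (((IntermediateField.normalClosure F ↥L Fbar).val.comp μ).comp (IsScalarTower.toAlgHom F (↥K) (↥L)))) x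
    exact h3.symm
  -- key: existence of the wreath components
  have key : ∀ (g : ↥(IntermediateField.normalClosure F ↥L Fbar) ≃ₐ[F] ↥(IntermediateField.normalClosure F ↥L Fbar))
      (ωq : ↥K →ₐ[F] ↥(IntermediateField.normalClosure F ↥K Fbar)), ∃ c : (↥L ≃ₐ[↥K] ↥L), ∀ x : ↥L,
      g (s ((π g)⁻¹ • ωq) x) = s ωq (c x) := by
    intro g ωq
    have h1 : ∀ x : ↥K, g (s ((π g)⁻¹ • ωq) (algebraMap (↥K) (↥L) x))
        = algebraMap (↥(IntermediateField.normalClosure F ↥K Fbar)) (↥(IntermediateField.normalClosure F ↥L Fbar)) (ωq x) := by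
      intro x
      rw [hs ((π g)⁻¹ • ωq) x, ← hcomm g]
      have h2 : (π g) (((π g)⁻¹ • ωq) x) = ωq x := DFunLike.congr_fun (smul_inv_smul (π g) ωq) x
      exact congrArg (algebraMap (↥(IntermediateField.normalClosure F ↥K Fbar)) (↥(IntermediateField.normalClosure F ↥L Fbar))) h2
    obtain ⟨c, hc⟩ := conj_aux (K := ↥K) (L := ↥L) (M := ↥(IntermediateField.normalClosure F ↥L Fbar))
      (s ωq : ↥L →+* ↥(IntermediateField.normalClosure F ↥L Fbar))
      (((g : ↥(IntermediateField.normalClosure F ↥L Fbar) →ₐ[F] ↥(IntermediateField.normalClosure F ↥L Fbar)).comp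
        (s ((π g)⁻¹ • ωq)) : ↥L →ₐ[F] ↥(IntermediateField.normalClosure F ↥L Fbar))
        : ↥L →+* ↥(IntermediateField.normalClosure F ↥L Fbar))
      (fun x => (h1 x).trans (hs ωq x).symm)
    exact ⟨c, hc⟩
  let fc := fun g ωq => (key g ωq).choose
  have hfc : ∀ g ωq (x : ↥L), g (s ((π g)⁻¹ • ωq) x) = s ωq (fc g ωq x) :=
    fun g ωq => (key g ωq).choose_spec
  have huniq : ∀ (ωq : ↥K →ₐ[F] ↥(IntermediateField.normalClosure F ↥K Fbar)) (c c' : ↥L ≃ₐ[↥K] ↥L),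
      (∀ x, s ωq (c x) = s ωq (c' x)) → c = c' := by
    intro ωq c c' h
    ext x
    exact congrArg Subtype.val ((s ωq).toRingHom.injective (h x))
  let Φ : (↥(IntermediateField.normalClosure F ↥L Fbar) ≃ₐ[F] ↥(IntermediateField.normalClosure F ↥L Fbar)) →
      WreathProduct (↥L ≃ₐ[↥K] ↥L) (↥K →ₐ[F] ↥(IntermediateField.normalClosure F ↥K Fbar))
        (↥(IntermediateField.normalClosure F ↥K Fbar) ≃ₐ[F] ↥(IntermediateField.normalClosure F ↥K Fbar)) :=
    fun g => ⟨fun ωq => fc g ωq, π g⟩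
  have hmul : ∀ g h, Φ (g * h) = Φ g * Φ h := by
    intro g h
    refine SemidirectProduct.ext ?_ (map_mul π g h)
    funext ωq
    show fc (g * h) ωq = fc g ωq * fc h ((π g)⁻¹ • ωq)
    apply huniq ωq
    intro x
    rw [← hfc (g * h) ωq x]
    have hmulapp : ∀ y : ↥L, (fc g ωq * fc h ((π g)⁻¹ • ωq)) y
        = fc g ωq (fc h ((π g)⁻¹ • ωq) y) := fun y => rfl
    rw [hmulapp, ← hfc g ωq, ← hfc h ((π g)⁻¹ • ωq) x]
    show (g * h) (s ((π (g * h))⁻¹ • ωq) x) = g (h (s ((π h)⁻¹ • (π g)⁻¹ • ωq) x))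
    rw [map_mul π, mul_inv_rev, mul_smul]
    rfl
  refine ⟨MonoidHom.mk' Φ hmul, ?_⟩
  rw [injective_iff_map_eq_one]
  intro g hg
  have h1 : π g = 1 := congrArg SemidirectProduct.right hg
  have h2 : ∀ ωq, fc g ωq = 1 := fun ωq => congrFun (congrArg SemidirectProduct.left hg) ωq
  have hfix : ∀ ωq (x : ↥L), g (s ωq x) = s ωq x := by
    intro ωq x
    have h5 := hfc g ωq x
    rw [h1, inv_one, one_smul, h2 ωq] at h5
    exact h5
  have hfixall : ∀ (μ : ↥L →ₐ[F] ↥(IntermediateField.normalClosure F ↥L Fbar)) (x : ↥L), g (μ x) = μ x := by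
    intro μ x
    obtain ⟨ωq, hωq⟩ := hrex μ
    obtain ⟨c, hc⟩ := conj_aux (K := ↥K) (L := ↥L) (M := ↥(IntermediateField.normalClosure F ↥L Fbar))
      (s ωq : ↥L →+* ↥(IntermediateField.normalClosure F ↥L Fbar)) (μ : ↥L →+* ↥(IntermediateField.normalClosure F ↥L Fbar))
      (fun y => (hωq y).trans (hs ωq y).symm)
    have hμ : μ x = s ωq (c x) := hc x
    rw [hμ, hfix ωq (c x)]
  -- conclude g = 1
  haveI : Algebra.IsAlgebraic F (↥L) := Algebra.IsAlgebraic.of_finite F (↥L)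
  have htop : IntermediateField.normalClosure F (↥L) (↥(IntermediateField.normalClosure F ↥L Fbar)) = ⊤ :=
    (Algebra.IsAlgebraic.isNormalClosure_iff.mp
      (Algebra.IsAlgebraic.isNormalClosure_normalClosure
        (fun x : ↥L => IsAlgClosed.splits _))).2
  let T : IntermediateField F (↥(IntermediateField.normalClosure F ↥L Fbar)) :=
    { AlgHom.equalizer (g : ↥(IntermediateField.normalClosure F ↥L Fbar) →ₐ[F] ↥(IntermediateField.normalClosure F ↥L Fbar))
        (AlgHom.id F (↥(IntermediateField.normalClosure F ↥L Fbar))) with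
      inv_mem' := fun x hx => by
        have hx' : g x = x := hx
        show g x⁻¹ = x⁻¹
        rw [map_inv₀, hx'] }
  have hle : IntermediateField.normalClosure F (↥L) (↥(IntermediateField.normalClosure F ↥L Fbar)) ≤ T := by
    rw [normalClosure_le_iff]
    rintro μ y ⟨x, rfl⟩
    exact hfixall μ x
  rw [htop] at hle
  ext y
  have h6 : g y = y := hle (IntermediateField.mem_top (x := y))
  exact congrArg Subtype.val h6
end

section
/- Let F be a field of characteristic ≠ 2 with a fixed algebraic closure F̄, and let K ⊆ L be intermediate fields of F̄/F with L/F finite and separable and with [L : K] = 2. Let K^c and L^c denote the Galois closures of K/F and L/F inside F̄, and let Ω := Hom_F(K, K^c) with Gal(K^c/F) acting on Ω by post-composition. Then there exists an injective group homomorphism from Gal(L^c/F) into the wreath product Gal(L/K) ≀_Ω Gal(K^c/F) = (Ω → Gal(L/K)) ⋊_θ Gal(K^c/F); here Gal(L/K) has order 2. -/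
/-- A degree-2 field extension is normal. -/
theorem normal_of_finrank_eq_two (K L : Type*) [Field K] [Field L] [Algebra K L]
    (h : Module.finrank K L = 2) : Normal K L := by
  haveI : FiniteDimensional K L := Module.finite_of_finrank_eq_succ h
  rw [normal_iff]
  intro x
  have hx : IsIntegral K x := IsIntegral.of_finite K x
  refine ⟨hx, ?_⟩
  have hdvd : (minpoly K x).natDegree ∣ 2 := h ▸ minpoly.degree_dvd hx
  have hne : minpoly K x ≠ 0 := minpoly.ne_zero hx
  rcases (Nat.dvd_prime Nat.prime_two).1 hdvd with h1 | h2
  · exact Polynomial.Splits.of_natDegree_le_one (by rw [Polynomial.natDegree_map]; exact h1.le)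
  · skip
    have hproot : ((minpoly K x).map (algebraMap K L)).IsRoot x := by
      rw [Polynomial.IsRoot, Polynomial.eval_map, ← Polynomial.aeval_def, minpoly.aeval]
    obtain ⟨q, hq⟩ := Polynomial.dvd_iff_isRoot.2 hproot
    have hpne : (minpoly K x).map (algebraMap K L) ≠ 0 :=
      Polynomial.map_ne_zero hne
    have hqne : q ≠ 0 := by rintro rfl; rw [mul_zero] at hq; exact hpne hq
    have hdeg : ((minpoly K x).map (algebraMap K L)).natDegree = 2 := by
      rw [Polynomial.natDegree_map]; exact h2
    rw [hq, Polynomial.natDegree_mul (Polynomial.X_sub_C_ne_zero x) hqne,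
      Polynomial.natDegree_X_sub_C] at hdeg
    rw [hq]
    exact Polynomial.Splits.mul (Polynomial.Splits.X_sub_C _)
      (Polynomial.Splits.of_natDegree_le_one (by omega))

/-- Two embeddings of a finite Galois extension `L/K` into a field `E` (which embeds in an
algebraically closed field) that agree on `K` differ by a unique element of `Gal(L/K)`. -/
theorem existsUnique_conj {K L E M : Type*} [Field K] [Field L] [Field E] [Field M]
    [Algebra K L] [FiniteDimensional K L] [IsGalois K L] [IsAlgClosed M]
    (j : E →+* M) (ψ₁ ψ₂ : L →+* E)
    (hK : ∀ x : K, ψ₁ (algebraMap K L x) = ψ₂ (algebraMap K L x)) :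
    ∃! σ : L ≃ₐ[K] L, ∀ x, ψ₂ x = ψ₁ (σ x) := by
  haveI : Algebra.IsSeparable K L := IsGalois.to_isSeparable
  letI : Algebra K M := RingHom.toAlgebra ((j.comp ψ₁).comp (algebraMap K L))
  let Ψ₁ : L →ₐ[K] M := { toRingHom := j.comp ψ₁, commutes' := fun r => rfl }
  let Ψ₂ : L →ₐ[K] M :=
    { toRingHom := j.comp ψ₂
      commutes' := fun r => by
        show j (ψ₂ (algebraMap K L r)) = j (ψ₁ (algebraMap K L r))
        rw [hK] }
  let Φ : (L ≃ₐ[K] L) → (L →ₐ[K] M) := fun σ => Ψ₁.comp σ.toAlgHom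
  have hinj : Function.Injective Φ := by
    intro σ τ h
    apply AlgEquiv.ext
    intro x
    have h1 : j (ψ₁ (σ x)) = j (ψ₁ (τ x)) := DFunLike.congr_fun h x
    exact ψ₁.injective (j.injective h1)
  have hcard : Fintype.card (L ≃ₐ[K] L) = Fintype.card (L →ₐ[K] M) := by
    rw [← Nat.card_eq_fintype_card, IsGalois.card_aut_eq_finrank, AlgHom.card]
  have hbij : Function.Bijective Φ :=
    (Fintype.bijective_iff_injective_and_card Φ).2 ⟨hinj, hcard⟩
  obtain ⟨σ, hσ⟩ := hbij.2 Ψ₂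
  refine ⟨σ, fun x => ?_, fun τ hτ => hinj ?_⟩
  · have h1 : j (ψ₁ (σ x)) = j (ψ₂ x) := DFunLike.congr_fun hσ x
    exact (j.injective h1).symm
  · rw [hσ]
    apply AlgHom.ext
    intro x
    exact congrArg j (hτ x).symm

/-- The fixed points of an automorphism, as an intermediate field. -/
def AlgEquiv.fixedIF {F E : Type*} [Field F] [Field E] [Algebra F E] (g : E ≃ₐ[F] E) :
    IntermediateField F E where
  carrier := {x | g x = x}
  mul_mem' {a b} ha hb := by
    simp only [Set.mem_setOf_eq, map_mul] at *; rw [ha, hb]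
  one_mem' := map_one g
  add_mem' {a b} ha hb := by
    simp only [Set.mem_setOf_eq, map_add] at *; rw [ha, hb]
  zero_mem' := map_zero g
  algebraMap_mem' := g.commutes
  inv_mem' x hx := by
    simp only [Set.mem_setOf_eq, map_inv₀] at *; rw [hx]

set_option synthInstance.maxHeartbeats 1000000 in
set_option maxHeartbeats 1000000 in
/-- Let `F` be a field of characteristic `≠ 2` with algebraic closure
`Fbar`, and let `F ⊆ K ⊆ L` be a tower inside `Fbar` with `L/F` finite and separable and
`[L : K] = 2`.  Let `K^c, L^c` be the Galois closures of `K/F`, `L/F` inside `Fbar` and let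
`Ω := Hom_F(K, K^c)` with `Gal(K^c/F)` acting by post-composition.  Then `Gal(L/K)` has
order `2` and there is an injective group homomorphism
`Gal(L^c/F) → Gal(L/K) ≀_Ω Gal(K^c/F)`. -/
theorem quadratic_embedding
    {F Fbar : Type*} [Field F] [Field Fbar] [Algebra F Fbar] [IsAlgClosure F Fbar]
    (hchar : ringChar F ≠ 2)
    (K L : IntermediateField F Fbar) (hKL : K ≤ L)
    [FiniteDimensional F ↥L] [Algebra.IsSeparable F ↥L]
    [Algebra ↥K ↥L] [IsScalarTower ↥K ↥L Fbar]
    (hquad : Module.finrank ↥K ↥L = 2) :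
    Nat.card (↥L ≃ₐ[↥K] ↥L) = 2 ∧
    ∃ φ : (↥(IntermediateField.normalClosure F ↥L Fbar) ≃ₐ[F] ↥(IntermediateField.normalClosure F ↥L Fbar)) →*
        WreathProduct (↥L ≃ₐ[↥K] ↥L) (↥K →ₐ[F] ↥(IntermediateField.normalClosure F ↥K Fbar))
          (↥(IntermediateField.normalClosure F ↥K Fbar) ≃ₐ[F] ↥(IntermediateField.normalClosure F ↥K Fbar)),
      Function.Injective φ := by
  -- set up the tower `F ⊆ K ⊆ L`
  have hFKL : ∀ x : F, algebraMap F ↥L x = algebraMap ↥K ↥L (algebraMap F ↥K x) := by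
    intro x
    apply (algebraMap ↥L Fbar).injective
    rw [← IsScalarTower.algebraMap_apply F ↥L Fbar,
      ← IsScalarTower.algebraMap_apply ↥K ↥L Fbar,
      ← IsScalarTower.algebraMap_apply F ↥K Fbar]
  haveI tFKL : IsScalarTower F ↥K ↥L := IsScalarTower.of_algebraMap_eq hFKL
  haveI : IsAlgClosed Fbar := IsAlgClosure.isAlgClosed F
  haveI : FiniteDimensional ↥K ↥L := Module.Finite.right F ↥K ↥L
  haveI : Algebra.IsSeparable ↥K ↥L := Algebra.isSeparable_tower_top_of_isSeparable F ↥K ↥L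
  haveI : Normal ↥K ↥L := normal_of_finrank_eq_two _ _ hquad
  haveI : IsGalois ↥K ↥L := ⟨⟩
  have hcard : Nat.card (↥L ≃ₐ[↥K] ↥L) = 2 := by
    rw [IsGalois.card_aut_eq_finrank, hquad]
  refine ⟨hcard, ?_⟩
  set E : IntermediateField F Fbar := IntermediateField.normalClosure F ↥L Fbar with hE
  set Kc : IntermediateField F Fbar := IntermediateField.normalClosure F ↥K Fbar with hKc
  have hKcE : Kc ≤ E := IntermediateField.normalClosure_mono K L hKL
  haveI : Normal F ↥E := normalClosure.normal F ↥L Fbar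
  haveI : Normal F ↥Kc := normalClosure.normal F ↥K Fbar
  letI : Algebra ↥Kc ↥E := (IntermediateField.inclusion hKcE).toAlgebra
  haveI : IsScalarTower F ↥Kc ↥E :=
    IsScalarTower.of_algebraMap_eq fun x => Subtype.ext rfl
  let res : (↥E ≃ₐ[F] ↥E) →* (↥Kc ≃ₐ[F] ↥Kc) := AlgEquiv.restrictNormalHom ↥Kc
  have hres : ∀ (g : ↥E ≃ₐ[F] ↥E) (y : ↥Kc),
      algebraMap ↥Kc ↥E (res g y) = g (algebraMap ↥Kc ↥E y) := fun g y =>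
    AlgEquiv.restrictNormal_commutes g ↥Kc y
  -- splitting of minimal polynomials in `E`
  haveI : Nonempty (↥L →ₐ[F] Fbar) := ⟨L.val⟩
  have hsplitsE : ∀ s : ↥L, ((minpoly F s).map (algebraMap F ↥E)).Splits := fun s =>
    IsNormalClosure.splits s
  -- every `ω : K →ₐ[F] Kc` extends to `L →ₐ[F] E`
  have hext : ∀ ω : ↥K →ₐ[F] ↥Kc, ∃ ψ : ↥L →ₐ[F] ↥E,
      ∀ x : ↥K, ψ (algebraMap ↥K ↥L x) = algebraMap ↥Kc ↥E (ω x) := by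
    intro ω
    set f : ↥K →ₐ[F] ↥E := (IntermediateField.inclusion hKcE).comp ω with hf
    have h1 : ∀ s : ↥L, IsIntegral ↥K s ∧ ((minpoly ↥K s).map f.toRingHom).Splits := by
      intro s
      refine ⟨IsIntegral.of_finite ↥K s, ?_⟩
      have hdvd : minpoly ↥K s ∣ (minpoly F s).map (algebraMap F ↥K) :=
        minpoly.dvd_map_of_isScalarTower F ↥K s
      have hsp : (((minpoly F s).map (algebraMap F ↥K)).map f.toRingHom).Splits := by
        rw [Polynomial.map_map]
        have hs := hsplitsE s
        rwa [← f.comp_algebraMap (R := F)] at hs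
      exact Polynomial.Splits.of_dvd hsp
        (Polynomial.map_ne_zero (Polynomial.map_ne_zero (minpoly.ne_zero (IsIntegral.of_finite F s))))
        (Polynomial.map_dvd _ hdvd)
    obtain ⟨ψ, hψ⟩ := IntermediateField.exists_algHom_of_splits' f h1
    exact ⟨ψ, fun x => DFunLike.congr_fun hψ x⟩
  choose e he using hext
  -- key conjugation datum
  have hconj : ∀ (g : ↥E ≃ₐ[F] ↥E) (ω : ↥K →ₐ[F] ↥Kc),
      ∃! σ : ↥L ≃ₐ[↥K] ↥L, ∀ x : ↥L, g (e ((res g)⁻¹ • ω) x) = e ω (σ x) := by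
    intro g ω
    have hagree : ∀ x : ↥K,
        (e ω).toRingHom (algebraMap ↥K ↥L x) =
          ((g.toRingHom.comp (e ((res g)⁻¹ • ω)).toRingHom : ↥L →+* ↥E))
            (algebraMap ↥K ↥L x) := by
      intro x
      show e ω (algebraMap ↥K ↥L x) = g (e ((res g)⁻¹ • ω) (algebraMap ↥K ↥L x))
      rw [he, he, ← hres]
      congr 1
      exact (DFunLike.congr_fun (smul_inv_smul (res g) ω) x).symm
    obtain ⟨σ, hσ, hσu⟩ := existsUnique_conj (algebraMap ↥E Fbar) (e ω).toRingHom
      (g.toRingHom.comp (e ((res g)⁻¹ • ω)).toRingHom) hagree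
    exact ⟨σ, fun x => hσ x, fun τ hτ => hσu τ hτ⟩
  choose fσ hfσ hfσu using hconj
  refine ⟨MonoidHom.mk' (fun g => ⟨fσ g, res g⟩) ?_, ?_⟩
  · -- multiplicativity
    intro g₁ g₂
    have hleft : fσ (g₁ * g₂) = fσ g₁ * (wreathTheta (↥L ≃ₐ[↥K] ↥L) (res g₁)) (fσ g₂) := by
      funext ω
      refine (hfσu (g₁ * g₂) ω _ ?_).symm
      intro x
      have hω : (res (g₁ * g₂))⁻¹ • ω = (res g₂)⁻¹ • ((res g₁)⁻¹ • ω) := by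
        rw [map_mul, mul_inv_rev, mul_smul]
      rw [hω]
      show g₁ (g₂ (e ((res g₂)⁻¹ • ((res g₁)⁻¹ • ω)) x)) =
        e ω ((fσ g₁ ω) ((fσ g₂ ((res g₁)⁻¹ • ω)) x))
      rw [hfσ g₂ ((res g₁)⁻¹ • ω) x, hfσ g₁ ω _]
    refine SemidirectProduct.ext ?_ ?_
    · exact hleft
    · exact map_mul res g₁ g₂
  · -- injectivity
    rw [injective_iff_map_eq_one]
    intro g hg
    have h1 : fσ g = 1 := congrArg SemidirectProduct.left hg
    have h2 : res g = 1 := congrArg SemidirectProduct.right hg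
    have hge : ∀ (ω : ↥K →ₐ[F] ↥Kc) (x : ↥L), g (e ω x) = e ω x := by
      intro ω x
      have h3 := hfσ g ω x
      rw [h2, inv_one, one_smul, h1] at h3
      simpa using h3
    have hT : E ≤ IntermediateField.map E.val g.fixedIF := by
      refine normalClosure_le_iff.mpr fun ψ => ?_
      set ψ' : ↥L →ₐ[F] ↥E := (normalClosure.algHomEquiv F ↥L Fbar).symm ψ with hψ'def
      have hψ' : ∀ x : ↥L, algebraMap ↥E Fbar (ψ' x) = ψ x := fun x =>
        DFunLike.congr_fun ((normalClosure.algHomEquiv F ↥L Fbar).apply_symm_apply ψ) x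
      set ρ : ↥K →ₐ[F] Fbar := ψ.comp (IsScalarTower.toAlgHom F ↥K ↥L) with hρdef
      set ω₀ : ↥K →ₐ[F] ↥Kc := (normalClosure.algHomEquiv F ↥K Fbar).symm ρ with hω₀def
      have hω₀ : ∀ x : ↥K, algebraMap ↥Kc Fbar (ω₀ x) = ψ (algebraMap ↥K ↥L x) := fun x =>
        DFunLike.congr_fun ((normalClosure.algHomEquiv F ↥K Fbar).apply_symm_apply ρ) x
      have hagree : ∀ x : ↥K,
          (e ω₀).toRingHom (algebraMap ↥K ↥L x) = ψ'.toRingHom (algebraMap ↥K ↥L x) := by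
        intro x
        apply (algebraMap ↥E Fbar).injective
        show algebraMap ↥E Fbar (e ω₀ (algebraMap ↥K ↥L x)) =
          algebraMap ↥E Fbar (ψ' (algebraMap ↥K ↥L x))
        rw [he ω₀ x, hψ' _, ← hω₀ x]
        rfl
      obtain ⟨σ, hσ, -⟩ := existsUnique_conj (algebraMap ↥E Fbar) (e ω₀).toRingHom
        ψ'.toRingHom hagree
      rintro _ ⟨x, rfl⟩
      refine ⟨ψ' x, ?_, hψ' x⟩
      show g (ψ' x) = ψ' x
      have : ψ' x = e ω₀ (σ x) := hσ x
      rw [this]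
      exact hge ω₀ (σ x)
    apply AlgEquiv.ext
    intro y
    obtain ⟨z, hz, hzy⟩ := hT y.2
    have hzyE : z = y := Subtype.ext hzy
    show g y = y
    rw [← hzyE]
    exact hz
end
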